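/- Let C₀ ⊆ F_q^ℓ be a p-divisible linear code (p prime) with p | ℓ, let C be the F_p-linear code of length n = qℓ whose parity-check matrix is the incidence matrix M of the transversal design associated to C₀ (rows indexed by codewords of C₀, columns by F_q × {1,…,ℓ}, M[c,(α,i)] = 1 iff c_i = α). Then the dual code C^⊥ is contained in C, and consequently dim C ≥ n/2. -/

import Mathlib

/-- For a p-divisible linear code C₀ ⊆ F_q^ℓ with p ∣ ℓ, the code C = ker M
(over F_p) defined by the incidence matrix M of the associated transversal
design contains its dual (the row space of M), and dim C ≥ n/2 with n = qℓ. -/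
theorem stmt7 {F : Type*} [Field F] [Fintype F] [DecidableEq F]
    (p ℓ : ℕ) [Fact p.Prime] (hpl : p ∣ ℓ)
    (C₀ : Submodule F (Fin ℓ → F))
    (hdiv : ∀ c ∈ C₀, p ∣ hammingNorm c)
    (M : Matrix C₀ (F × Fin ℓ) (ZMod p))
    (hM : ∀ (c : C₀) (q : F × Fin ℓ),
      M c q = if c.1 q.2 = q.1 then 1 else 0) :
    Submodule.span (ZMod p) (Set.range fun c : C₀ => M c)
      ≤ LinearMap.ker M.mulVecLin ∧
    Fintype.card F * ℓ ≤
      2 * Module.finrank (ZMod p) (LinearMap.ker M.mulVecLin) := by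
  haveI : Fintype C₀ := Fintype.ofFinite C₀
  have hspan : Submodule.span (ZMod p) (Set.range fun c : C₀ => M c)
      ≤ LinearMap.ker M.mulVecLin := by
    rw [Submodule.span_le]
    rintro _ ⟨c', rfl⟩
    simp only [SetLike.mem_coe, LinearMap.mem_ker]
    funext c
    have hdot : M.mulVecLin (M c') c
        = ∑ q : F × Fin ℓ, M c q * M c' q := by
      simp [Matrix.mulVecLin_apply, Matrix.mulVec, dotProduct]
    rw [hdot]
    have hsum : ∑ q : F × Fin ℓ, M c q * M c' q
        = ((Finset.univ.filter fun i : Fin ℓ => c.1 i = c'.1 i).card : ZMod p) := by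
      rw [Fintype.sum_prod_type_right]
      have h1 : ∀ i : Fin ℓ, (∑ α : F, M c (α, i) * M c' (α, i))
          = if c.1 i = c'.1 i then 1 else 0 := by
        intro i
        simp only [hM]
        rw [Finset.sum_eq_single (c.1 i)]
        · by_cases h : c.1 i = c'.1 i
          · simp [h]
          · rw [if_pos rfl, if_neg (fun h' => h h'.symm), if_neg h, mul_zero]
        · intro b _ hb
          simp [Ne.symm hb]
        · simp
      simp_rw [h1]
      rw [Finset.sum_boole]
    rw [hsum]
    -- card of agreement set = ℓ - hammingDist, divisible by p
    have hcard : (Finset.univ.filter fun i : Fin ℓ => c.1 i = c'.1 i).card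
        = ℓ - hammingDist c.1 c'.1 := by
      have := Finset.card_filter_add_card_filter_not
        (s := (Finset.univ : Finset (Fin ℓ))) (p := fun i => c.1 i = c'.1 i)
      have hd : hammingDist c.1 c'.1
          = (Finset.univ.filter fun i : Fin ℓ => ¬ c.1 i = c'.1 i).card := rfl
      simp only [Finset.card_univ, Fintype.card_fin] at this
      omega
    have hdvd : p ∣ ℓ - hammingDist c.1 c'.1 := by
      refine Nat.dvd_sub hpl ?_
      rw [hammingDist_eq_hammingNorm]
      exact hdiv _ (add_mem (neg_mem c.2) c'.2)
    show ((Finset.univ.filter fun i : Fin ℓ => c.1 i = c'.1 i).card : ZMod p) = 0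
    rw [hcard, ZMod.natCast_eq_zero_iff]
    exact hdvd
  refine ⟨hspan, ?_⟩
  have h2 : M.rank ≤ Module.finrank (ZMod p) (LinearMap.ker M.mulVecLin) := by
    rw [Matrix.rank_eq_finrank_span_row]
    exact Submodule.finrank_mono hspan
  have h3 := LinearMap.finrank_range_add_finrank_ker M.mulVecLin
  have h4 : Module.finrank (ZMod p) (F × Fin ℓ → ZMod p) = Fintype.card F * ℓ := by
    simp [Module.finrank_pi, Fintype.card_prod]
  have h5 : M.rank = Module.finrank (ZMod p) (LinearMap.range M.mulVecLin) := rfl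
  omega
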